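/- The cardinality of R_{n,r}, the set of Moisil representable functions L_n^r → L_n, equals the product over all tuples a⃗ ∈ L_n^r of |{0, 1, a_1, ..., a_r, 1-a_1, ..., 1-a_r}|. -/

import Mathlib

/-- The underlying set of the standard LM_n-algebra: {0, 1/n, ..., (n-1)/n, 1} ⊆ ℚ. -/
def Ln (n : ℕ) : Set ℚ := {x | ∃ j : ℕ, j ≤ n ∧ x = (j : ℚ) / n}

/-- The Chrysippian endomorphism Δ_i on ℚ: on L_n, Δ_i(j/n) = 1 iff i + j ≥ n + 1. -/
def Delta (n i : ℕ) (x : ℚ) : ℚ := if (n : ℚ) + 1 ≤ (i : ℚ) + x * n then 1 else 0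

/-- Terms in the signature (∨, ∧, N, 0, 1, Δ_1, ..., Δ_n) over variables x_1, ..., x_r. -/
inductive LMTerm (r : ℕ) where
  | var (i : Fin r)
  | zero
  | one
  | neg (t : LMTerm r)
  | sup (t u : LMTerm r)
  | inf (t u : LMTerm r)
  | delta (i : ℕ) (t : LMTerm r)

/-- Evaluation of a term in the standard LM_n-algebra under a valuation φ. -/
def LMTerm.eval (n : ℕ) {r : ℕ} (φ : Fin r → ℚ) : LMTerm r → ℚ
  | .var i => φ i
  | .zero => 0
  | .one => 1
  | .neg t => 1 - t.eval n φ
  | .sup t u => max (t.eval n φ) (u.eval n φ)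
  | .inf t u => min (t.eval n φ) (u.eval n φ)
  | .delta i t => Delta n i (t.eval n φ)

/-- A function is Moisil representable if some term evaluates to it under
every valuation into L_n. -/
def Representable (n r : ℕ) (f : (Fin r → ℚ) → ℚ) : Prop :=
  ∃ t : LMTerm r, ∀ φ : Fin r → ℚ, (∀ i, φ i ∈ Ln n) → t.eval n φ = f φ

/-- The set {0, 1, a_1, ..., a_r, 1 - a_1, ..., 1 - a_r}. -/
def Mset (r : ℕ) (a : Fin r → ℚ) : Set ℚ :=
  {x | x = 0 ∨ x = 1 ∨ ∃ i : Fin r, x = a i ∨ x = 1 - a i}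

/-- Tuples (a_1, ..., a_r) ∈ L_n^r. -/
def DTup (n r : ℕ) := {a : Fin r → ℚ // ∀ i, a i ∈ Ln n}

/-- Representability for functions defined on L_n^r. -/
def RepD (n r : ℕ) (f : DTup n r → ℚ) : Prop :=
  ∃ t : LMTerm r, ∀ a : DTup n r, t.eval n a.1 = f a

/-- The tuple of rationals encoded by v : Fin r → Fin (n+1); these enumerate L_n^r. -/
def tupOf (n : ℕ) {r : ℕ} (v : Fin r → Fin (n + 1)) : Fin r → ℚ :=
  fun i => ((v i : ℕ) : ℚ) / n

/- ### Auxiliary lemmas -/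

lemma Ln_bounds {n : ℕ} (hn : n ≠ 0) {x : ℚ} (hx : x ∈ Ln n) : 0 ≤ x ∧ x ≤ 1 := by
  obtain ⟨j, hj, rfl⟩ := hx
  have hn' : (0:ℚ) < n := by positivity
  constructor
  · positivity
  · rw [div_le_one hn']
    exact_mod_cast hj

lemma Mset_bounds {n r : ℕ} (hn : n ≠ 0) {a : Fin r → ℚ} (ha : ∀ i, a i ∈ Ln n)
    {c : ℚ} (hc : c ∈ Mset r a) : 0 ≤ c ∧ c ≤ 1 := by
  rcases hc with rfl | rfl | ⟨i, rfl | rfl⟩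
  · norm_num
  · norm_num
  · exact Ln_bounds hn (ha i)
  · have := Ln_bounds hn (ha i); constructor <;> linarith [this.1, this.2]

lemma eval_mem_Mset (n : ℕ) {r : ℕ} (t : LMTerm r) (φ : Fin r → ℚ) :
    t.eval n φ ∈ Mset r φ := by
  induction t with
  | var i => exact Or.inr (Or.inr ⟨i, Or.inl rfl⟩)
  | zero => exact Or.inl rfl
  | one => exact Or.inr (Or.inl rfl)
  | neg t ih =>
    rcases ih with h | h | ⟨i, h | h⟩
    · exact Or.inr (Or.inl (by simp [LMTerm.eval, h]))
    · exact Or.inl (by simp [LMTerm.eval, h])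
    · exact Or.inr (Or.inr ⟨i, Or.inr (by simp [LMTerm.eval, h])⟩)
    · exact Or.inr (Or.inr ⟨i, Or.inl (by simp [LMTerm.eval, h])⟩)
  | sup t u iht ihu =>
    rcases max_choice (t.eval n φ) (u.eval n φ) with h | h
    · show max _ _ ∈ _; rw [h]; exact iht
    · show max _ _ ∈ _; rw [h]; exact ihu
  | inf t u iht ihu =>
    rcases min_choice (t.eval n φ) (u.eval n φ) with h | h
    · show min _ _ ∈ _; rw [h]; exact iht
    · show min _ _ ∈ _; rw [h]; exact ihu
  | delta i t ih =>
    show Delta n i _ ∈ _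
    unfold Delta
    split
    · exact Or.inr (Or.inl rfl)
    · exact Or.inl rfl

/- ### Characteristic terms -/

def chi1 {r : ℕ} (n j : ℕ) (i : Fin r) : LMTerm r :=
  .inf (.delta (n + 1 - j) (.var i)) (.neg (.delta (n - j) (.var i)))

lemma chi1_eval {r : ℕ} (n j k : ℕ) (hn : n ≠ 0) (hj : j ≤ n) (i : Fin r)
    (φ : Fin r → ℚ) (hφ : φ i = (k : ℚ) / n) :
    (chi1 n j i).eval n φ = if k = j then 1 else 0 := by
  have hn0 : (n : ℚ) ≠ 0 := Nat.cast_ne_zero.mpr hn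
  have hx : φ i * n = (k : ℚ) := by rw [hφ]; field_simp
  have hc1 : ((n : ℚ) + 1 ≤ ((n + 1 - j : ℕ) : ℚ) + φ i * n) ↔ j ≤ k := by
    rw [hx, Nat.cast_sub (by omega)]
    push_cast
    constructor
    · intro h
      have : (j : ℚ) ≤ k := by linarith
      exact_mod_cast this
    · intro h
      have : (j : ℚ) ≤ k := by exact_mod_cast h
      linarith
  have hc2 : ((n : ℚ) + 1 ≤ ((n - j : ℕ) : ℚ) + φ i * n) ↔ j < k := by
    rw [hx, Nat.cast_sub hj]
    constructor
    · intro h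
      have : (j : ℚ) + 1 ≤ k := by linarith
      exact_mod_cast this
    · intro h
      have : (j : ℚ) + 1 ≤ k := by exact_mod_cast h
      linarith
  show min (Delta n (n + 1 - j) (φ i)) (1 - Delta n (n - j) (φ i)) = _
  unfold Delta
  simp only [hc1, hc2]
  rcases lt_trichotomy k j with h | h | h
  · rw [if_neg (by omega), if_neg (by omega), if_neg (by omega)]; norm_num
  · rw [if_pos (by omega), if_neg (by omega), if_pos (by omega)]; norm_num
  · rw [if_pos (by omega), if_pos (by omega), if_neg (by omega)]; norm_num

lemma min_ite (P Q : Prop) [Decidable P] [Decidable Q] :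
    min (if P then (1:ℚ) else 0) (if Q then (1:ℚ) else 0) = if P ∧ Q then (1:ℚ) else 0 := by
  split_ifs <;> simp_all <;> norm_num

def chiList (n : ℕ) {r : ℕ} (v : Fin r → Fin (n + 1)) : List (Fin r) → LMTerm r
  | [] => .one
  | i :: l => .inf (chi1 n (v i) i) (chiList n v l)

lemma chiList_eval {n r : ℕ} (hn : n ≠ 0) (v : Fin r → Fin (n + 1)) (l : List (Fin r))
    (φ : Fin r → ℚ) (k : Fin r → ℕ) (hk : ∀ i, φ i = (k i : ℚ) / n) :
    (chiList n v l).eval n φ = if ∀ i ∈ l, k i = (v i : ℕ) then 1 else 0 := by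
  induction l with
  | nil => simp [chiList, LMTerm.eval]
  | cons i l ih =>
    show min ((chi1 n (v i) i).eval n φ) ((chiList n v l).eval n φ) = _
    rw [chi1_eval n (v i) (k i) hn (Nat.lt_succ_iff.mp (v i).isLt) i φ (hk i), ih, min_ite]
    simp [List.forall_mem_cons]

def chiTup (n : ℕ) {r : ℕ} (v : Fin r → Fin (n + 1)) : LMTerm r :=
  chiList n v (List.finRange r)

lemma chiTup_eval {n r : ℕ} (hn : n ≠ 0) (v : Fin r → Fin (n + 1))
    (φ : Fin r → ℚ) (k : Fin r → ℕ) (hk : ∀ i, φ i = (k i : ℚ) / n) :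
    (chiTup n v).eval n φ = if ∀ i, k i = (v i : ℕ) then 1 else 0 := by
  rw [chiTup, chiList_eval hn v _ φ k hk]
  simp [List.mem_finRange]

/- ### Selector terms -/

lemma exists_sel {n r : ℕ} (hn : n ≠ 0) (a : Fin r → ℚ) (c : ℚ) (hc : c ∈ Mset r a) :
    ∃ s : LMTerm r, s.eval n a = c ∧
      ∀ ψ : Fin r → ℚ, (∀ i, ψ i ∈ Ln n) → 0 ≤ s.eval n ψ ∧ s.eval n ψ ≤ 1 := by
  rcases hc with rfl | rfl | ⟨i, rfl | rfl⟩
  · exact ⟨.zero, rfl, fun ψ h => by norm_num [LMTerm.eval]⟩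
  · exact ⟨.one, rfl, fun ψ h => by norm_num [LMTerm.eval]⟩
  · exact ⟨.var i, rfl, fun ψ h => Ln_bounds hn (h i)⟩
  · refine ⟨.neg (.var i), rfl, fun ψ h => ?_⟩
    have := Ln_bounds hn (h i)
    show 0 ≤ 1 - ψ i ∧ 1 - ψ i ≤ 1
    constructor <;> linarith [this.1, this.2]

/- ### Completeness -/

lemma tupOf_mem (n : ℕ) {r : ℕ} (v : Fin r → Fin (n + 1)) (i : Fin r) :
    tupOf n v i ∈ Ln n :=
  ⟨(v i : ℕ), Nat.lt_succ_iff.mp (v i).isLt, rfl⟩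

def foldT (n : ℕ) {r : ℕ} (sel : (Fin r → Fin (n + 1)) → LMTerm r) :
    List (Fin r → Fin (n + 1)) → LMTerm r
  | [] => .zero
  | v :: l => .sup (.inf (chiTup n v) (sel v)) (foldT n sel l)

lemma rep_of_mem (n r : ℕ) (hn : n ≠ 0) (g : DTup n r → ℚ)
    (hg : ∀ a, g a ∈ Mset r a.1) : RepD n r g := by
  choose s hs1 hs2 using fun v : Fin r → Fin (n + 1) =>
    exists_sel hn (tupOf n v) (g ⟨tupOf n v, tupOf_mem n v⟩) (hg _)
  refine ⟨foldT n s (Finset.univ.toList), fun a => ?_⟩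
  choose k hk1 hk2 using a.2
  have hga := Mset_bounds hn a.2 (hg a)
  set v₀ : Fin r → Fin (n + 1) := fun i => ⟨k i, Nat.lt_succ_of_le (hk1 i)⟩ with hv₀
  have htup : tupOf n v₀ = a.1 := by
    funext i; rw [tupOf]; exact (hk2 i).symm
  have ha : (⟨tupOf n v₀, tupOf_mem n v₀⟩ : DTup n r) = a := Subtype.ext htup
  have hchi : ∀ v : Fin r → Fin (n + 1),
      (chiTup n v).eval n a.1 = if v = v₀ then 1 else 0 := by
    intro v
    rw [chiTup_eval hn v a.1 k hk2]
    congr 1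
    simp only [eq_iff_iff]
    constructor
    · intro h; funext i; exact Fin.ext (h i).symm
    · intro h i; rw [h]
  have key : ∀ l : List (Fin r → Fin (n + 1)),
      (foldT n s l).eval n a.1 ≤ g a ∧ (v₀ ∈ l → g a ≤ (foldT n s l).eval n a.1) := by
    intro l
    induction l with
    | nil => exact ⟨hga.1, by simp⟩
    | cons v l ih =>
      constructor
      · show max (min ((chiTup n v).eval n a.1) ((s v).eval n a.1)) _ ≤ g a
        refine max_le ?_ ih.1
        rw [hchi v]
        by_cases hv : v = v₀
        · rw [if_pos hv, hv]
          calc min 1 ((s v₀).eval n a.1) ≤ (s v₀).eval n a.1 := min_le_right _ _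
            _ = g a := by rw [← htup, hs1 v₀, ha]
        · rw [if_neg hv]
          exact le_trans (min_le_left _ _) hga.1
      · intro hv
        rcases List.mem_cons.mp hv with hveq | hvl
        · show g a ≤ max (min ((chiTup n v).eval n a.1) ((s v).eval n a.1)) _
          refine le_trans ?_ (le_max_left _ _)
          rw [hchi v, if_pos hveq.symm, hveq.symm]
          have hsv : (s v₀).eval n a.1 = g a := by rw [← htup, hs1 v₀, ha]
          rw [hsv, min_eq_right hga.2]
        · exact le_trans (ih.2 hvl)
            (le_max_right (min ((chiTup n v).eval n a.1) ((s v).eval n a.1)) _)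
  exact le_antisymm (key _).1 ((key _).2 (Finset.mem_toList.mpr (Finset.mem_univ _)))

/- ### The bijection and counting -/

lemma tupOf_inj {n r : ℕ} (hn : n ≠ 0) : Function.Injective (tupOf n (r := r)) := by
  intro v w h
  funext i
  have h' : ((v i : ℕ) : ℚ) / n = ((w i : ℕ) : ℚ) / n := congrFun h i
  have hn0 : (n : ℚ) ≠ 0 := Nat.cast_ne_zero.mpr hn
  have : ((v i : ℕ) : ℚ) = ((w i : ℕ) : ℚ) := by
    field_simp at h'; exact_mod_cast h'
  exact Fin.ext (by exact_mod_cast this)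

lemma exists_v {n r : ℕ} (a : DTup n r) : ∃ v : Fin r → Fin (n + 1), tupOf n v = a.1 := by
  choose k hk1 hk2 using a.2
  exact ⟨fun i => ⟨k i, Nat.lt_succ_of_le (hk1 i)⟩, funext fun i => (hk2 i).symm⟩

noncomputable def vOf {n r : ℕ} (a : DTup n r) : Fin r → Fin (n + 1) :=
  (exists_v a).choose

lemma vOf_spec {n r : ℕ} (a : DTup n r) : tupOf n (vOf a) = a.1 :=
  (exists_v a).choose_spec

noncomputable def repEquiv (n r : ℕ) (hn : n ≠ 0) :
    {f : DTup n r → ℚ // RepD n r f} ≃ ((v : Fin r → Fin (n + 1)) → (Mset r (tupOf n v))) where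
  toFun f v := ⟨f.1 ⟨tupOf n v, tupOf_mem n v⟩, by
    obtain ⟨t, ht⟩ := f.2
    convert eval_mem_Mset n t (tupOf n v) using 1
    exact (ht _).symm⟩
  invFun g := ⟨fun a => (g (vOf a)).1, by
    apply rep_of_mem n r hn
    intro a
    have := (g (vOf a)).2
    rw [← vOf_spec a]; exact this⟩
  left_inv f := by
    apply Subtype.ext
    funext a
    exact congrArg f.1 (Subtype.ext (vOf_spec a))
  right_inv g := by
    funext v
    apply Subtype.ext
    have h : vOf (⟨tupOf n v, tupOf_mem n v⟩ : DTup n r) = v :=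
      tupOf_inj hn (vOf_spec ⟨tupOf n v, tupOf_mem n v⟩)
    exact congrArg (fun w => ((g w : ℚ))) h

/-- The cardinality of R_{n,r} equals the product, over all tuples a⃗ ∈ L_n^r,
of the size of {0, 1, a_1, ..., a_r, 1-a_1, ..., 1-a_r}. -/
theorem card_representable (n r : ℕ) (hn : 2 ≤ n) (hr : 1 ≤ r) :
    Nat.card {f : DTup n r → ℚ // RepD n r f} =
      ∏ v : Fin r → Fin (n + 1), (Mset r (tupOf n v)).ncard := by
  have hn0 : n ≠ 0 := by omega
  rw [Nat.card_congr (repEquiv n r hn0), Nat.card_pi]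
  rfl
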